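/- For any two countable measurable partitions B and C of a probability space with K_w(B) and K_w(C) finite (where K_w(P) = Σ_{P∈P} μ(P)|log μ(P)|^w, w ≥ 1, and all atoms have measure ≤ e^{-w}), the conditional moment satisfies K_w(C|B) ≤ K_w(C), where K_w(C|B) = Σ_{B,C} μ(B∩C) |log(μ(B∩C)/μ(B))|^w. -/

import Mathlib

open MeasureTheory

noncomputable def phi (w : ℝ) (x : ℝ) : ℝ := x * (-Real.log x) ^ w

lemma phi_hasDerivAt {w : ℝ} (hw : 1 ≤ w) {x : ℝ} (hx : 0 < x) :
    HasDerivAt (phi w) ((-Real.log x) ^ w - w * (-Real.log x) ^ (w - 1)) x := by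
  have h1 : HasDerivAt (fun y => -Real.log y) (-x⁻¹) x := (Real.hasDerivAt_log hx.ne').neg
  have h2 : HasDerivAt (fun z : ℝ => z ^ w) (w * (-Real.log x) ^ (w - 1)) (-Real.log x) :=
    Real.hasDerivAt_rpow_const (Or.inr hw)
  have h3 : HasDerivAt (fun y => (-Real.log y) ^ w)
      (w * (-Real.log x) ^ (w - 1) * -x⁻¹) x := by have := h2.comp x h1; exact this
  have h4 := (hasDerivAt_id x).mul h3
  refine HasDerivAt.congr_deriv (f := phi w) h4 ?_
  rw [id]
  field_simp
  ring

lemma neg_log_gt {w x : ℝ} (hx : 0 < x) (hxr : x < Real.exp (-w)) : w < -Real.log x := by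
  have := (Real.log_lt_iff_lt_exp hx).2 hxr
  linarith

lemma phi_deriv_factor {w x : ℝ} (hL : 0 < -Real.log x) :
    (-Real.log x) ^ w - w * (-Real.log x) ^ (w - 1)
      = (-Real.log x) ^ (w - 1) * (-Real.log x - w) := by
  have h : (-Real.log x) ^ w = (-Real.log x) ^ (w - 1) * (-Real.log x) := by
    rw [← Real.rpow_add_one hL.ne' (w - 1)]; ring_nf
  rw [h]; ring

lemma phi_contOn {w : ℝ} (hw : 1 ≤ w) {D : Set ℝ} (hD : ∀ x ∈ D, 0 < x) :
    ContinuousOn (phi w) D := fun x hx =>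
  ((phi_hasDerivAt hw (hD x hx)).continuousAt).continuousWithinAt

lemma phi_diffOn {w : ℝ} (hw : 1 ≤ w) {D : Set ℝ} (hD : ∀ x ∈ D, 0 < x) :
    DifferentiableOn ℝ (phi w) D := fun x hx =>
  ((phi_hasDerivAt hw (hD x hx)).differentiableAt).differentiableWithinAt

lemma phi_monoOn {w : ℝ} (hw : 1 ≤ w) :
    MonotoneOn (phi w) (Set.Ioc 0 (Real.exp (-w))) := by
  apply monotoneOn_of_deriv_nonneg (convex_Ioc _ _)
      (phi_contOn hw (fun x hx => hx.1))
      ((phi_diffOn hw (fun x hx => hx.1)).mono interior_subset)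
  intro x hx
  rw [interior_Ioc] at hx
  have hL : w < -Real.log x := neg_log_gt hx.1 hx.2
  have hL0 : 0 < -Real.log x := by linarith [neg_log_gt hx.1 hx.2, hw]
  rw [(phi_hasDerivAt hw hx.1).deriv, phi_deriv_factor hL0]
  have := Real.rpow_nonneg hL0.le (w - 1)
  nlinarith

lemma phi_antiOn {w : ℝ} (hw : 1 ≤ w) :
    AntitoneOn (phi w) (Set.Icc (Real.exp (-w)) 1) := by
  have hr : (0:ℝ) < Real.exp (-w) := Real.exp_pos _
  apply antitoneOn_of_deriv_nonpos (convex_Icc _ _)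
      (phi_contOn hw (fun x hx => lt_of_lt_of_le hr hx.1))
      ((phi_diffOn hw (fun x hx => lt_of_lt_of_le hr (interior_subset hx).1)).mono
        (le_refl _))
  intro x hx
  rw [interior_Icc] at hx
  have hx0 : 0 < x := lt_trans hr hx.1
  have hLw : -Real.log x < w := by
    have := (Real.lt_log_iff_exp_lt hx0).2 hx.1
    linarith
  have hL0 : 0 ≤ -Real.log x := by
    have := Real.log_nonpos hx0.le hx.2.le
    linarith
  rw [(phi_hasDerivAt hw hx0).deriv]
  rcases eq_or_lt_of_le hL0 with h | h
  · rw [← h]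
    have h1 : (0:ℝ) ^ w = 0 := Real.zero_rpow (by linarith)
    have h2 : (0:ℝ) ^ (w-1) = 0 ∨ (0:ℝ) ^ (w-1) = 1 := by
      rcases eq_or_lt_of_le hw with h' | h'
      · right; rw [← h']; norm_num [Real.rpow_zero]
      · left; exact Real.zero_rpow (by linarith)
    rcases h2 with h2 | h2 <;> rw [h1, h2] <;> nlinarith
  · rw [phi_deriv_factor h]
    have := Real.rpow_nonneg h.le (w - 1)
    nlinarith

lemma phi_concaveOn {w : ℝ} (hw : 1 ≤ w) :
    ConcaveOn ℝ (Set.Ioc 0 (Real.exp (-w))) (phi w) := by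
  apply AntitoneOn.concaveOn_of_deriv (convex_Ioc _ _)
      (phi_contOn hw (fun x hx => hx.1))
      ((phi_diffOn hw (fun x hx => hx.1)).mono interior_subset)
  intro x hx y hy hxy
  rw [interior_Ioc] at hx hy
  have hLx : w < -Real.log x := neg_log_gt hx.1 hx.2
  have hLy : w < -Real.log y := neg_log_gt hy.1 hy.2
  have hLyx : -Real.log y ≤ -Real.log x := by
    have := Real.log_le_log_iff hx.1 hy.1 |>.2 hxy  -- maybe wrong name
    linarith
  have hLx0 : 0 < -Real.log x := by linarith
  have hLy0 : 0 < -Real.log y := by linarith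
  rw [(phi_hasDerivAt hw hx.1).deriv, (phi_hasDerivAt hw hy.1).deriv,
    phi_deriv_factor hLx0, phi_deriv_factor hLy0]
  apply mul_le_mul
  · exact Real.rpow_le_rpow hLy0.le hLyx (by linarith)
  · linarith
  · linarith
  · exact Real.rpow_nonneg hLx0.le _

lemma phi_nonneg {w x : ℝ} (hx0 : 0 ≤ x) (hx1 : x ≤ 1) : 0 ≤ phi w x := by
  apply mul_nonneg hx0
  apply Real.rpow_nonneg
  rcases eq_or_lt_of_le hx0 with h|h
  · simp [← h]
  · linarith [Real.log_nonpos h.le hx1]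

lemma phi_le_min {w : ℝ} (hw : 1 ≤ w) {t : ℝ} (ht0 : 0 < t) (ht1 : t ≤ 1) :
    phi w t ≤ phi w (min t (Real.exp (-w))) := by
  rcases le_or_gt t (Real.exp (-w)) with h | h
  · rw [min_eq_left h]
  · rw [min_eq_right h.le]
    have hr1 : Real.exp (-w) ≤ 1 := by
      rw [Real.exp_le_one_iff]; linarith
    exact phi_antiOn hw ⟨le_refl _, hr1⟩ ⟨h.le, ht1⟩ h.le

lemma finite_jensen {w : ℝ} (hw : 1 ≤ w) (s : Finset ℕ) (a b : ℕ → ℝ)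
    (hb : ∀ i, 0 ≤ b i) (hba : ∀ i, b i ≤ a i)
    (hsa : ∑ i ∈ s, a i ≤ 1) {c : ℝ} (hsb : ∑ i ∈ s, b i ≤ c)
    (hc : c ≤ Real.exp (-w)) :
    ∑ i ∈ s, b i * |Real.log (b i / a i)| ^ w ≤ c * |Real.log c| ^ w := by
  set r := Real.exp (-w) with hr
  have hr0 : 0 < r := Real.exp_pos _
  have hr1 : r < 1 := by
    rw [hr, Real.exp_lt_one_iff]; linarith
  have hc0 : 0 ≤ c := le_trans (Finset.sum_nonneg fun i _ => hb i) hsb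
  have hrhs0 : 0 ≤ c * |Real.log c| ^ w :=
    mul_nonneg hc0 (Real.rpow_nonneg (abs_nonneg _) _)
  -- restrict to indices with positive b
  set s' : Finset ℕ := s.filter (fun i => 0 < b i) with hs'
  have hsum_eq : ∑ i ∈ s, b i * |Real.log (b i / a i)| ^ w
      = ∑ i ∈ s', b i * |Real.log (b i / a i)| ^ w := by
    rw [hs']
    refine (Finset.sum_filter_of_ne ?_).symm
    intro i _ hne
    rcases (hb i).lt_or_eq with h | h
    · exact h
    · exact absurd (by rw [← h]; ring) hne
  rw [hsum_eq]
  rcases Finset.eq_empty_or_nonempty s' with he | hne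
  · rw [he, Finset.sum_empty]; exact hrhs0
  have hbpos : ∀ i ∈ s', 0 < b i := fun i hi => (Finset.mem_filter.1 hi).2
  have hapos : ∀ i ∈ s', 0 < a i := fun i hi => lt_of_lt_of_le (hbpos i hi) (hba i)
  set t : ℕ → ℝ := fun i => min (b i / a i) r with ht
  have htmem : ∀ i ∈ s', t i ∈ Set.Ioc 0 r := by
    intro i hi
    constructor
    · exact lt_min (div_pos (hbpos i hi) (hapos i hi)) hr0
    · exact min_le_right _ _
  -- term rewrite
  have hterm : ∀ i ∈ s', b i * |Real.log (b i / a i)| ^ w ≤ a i * phi w (t i) := by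
    intro i hi
    have hai := hapos i hi
    have hdiv1 : b i / a i ≤ 1 := (div_le_one hai).2 (hba i)
    have hdiv0 : 0 < b i / a i := div_pos (hbpos i hi) hai
    have habs : |Real.log (b i / a i)| = -Real.log (b i / a i) :=
      abs_of_nonpos (Real.log_nonpos hdiv0.le hdiv1)
    have h1 : b i * |Real.log (b i / a i)| ^ w = a i * phi w (b i / a i) := by
      rw [habs]
      unfold phi
      rw [← mul_assoc, mul_div_cancel₀ _ hai.ne']
    rw [h1]
    exact mul_le_mul_of_nonneg_left (phi_le_min hw hdiv0 hdiv1) hai.le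
  have hsum1 : ∑ i ∈ s', b i * |Real.log (b i / a i)| ^ w ≤ ∑ i ∈ s', a i * phi w (t i) :=
    Finset.sum_le_sum hterm
  set A : ℝ := ∑ i ∈ s', a i with hA
  have hA0 : 0 < A := Finset.sum_pos (fun i hi => hapos i hi) hne
  have hA1 : A ≤ 1 := by
    refine le_trans ?_ hsa
    apply Finset.sum_le_sum_of_subset_of_nonneg (Finset.filter_subset _ _)
    intro i hi _
    exact le_trans (hb i) (hba i)
  set m : ℝ := ∑ i ∈ s', a i * t i with hm
  have hm0 : 0 < m :=
    Finset.sum_pos (fun i hi => mul_pos (hapos i hi) (htmem i hi).1) hne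
  have hmc : m ≤ c := by
    have h1 : m ≤ ∑ i ∈ s', b i := by
      apply Finset.sum_le_sum
      intro i hi
      calc a i * t i ≤ a i * (b i / a i) :=
            mul_le_mul_of_nonneg_left (min_le_left _ _) (hapos i hi).le
        _ = b i := by rw [mul_div_cancel₀ _ (hapos i hi).ne']
    have h2 : ∑ i ∈ s', b i ≤ ∑ i ∈ s, b i :=
      Finset.sum_le_sum_of_subset_of_nonneg (Finset.filter_subset _ _)
        (fun i _ _ => hb i)
    linarith
  have hc0' : 0 < c := lt_of_lt_of_le hm0 hmc
  -- Jensen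
  set W : ℕ → ℝ := fun i => a i / A with hW
  have hWsum : ∑ i ∈ s', W i = 1 := by
    rw [hW, ← Finset.sum_div, ← hA, div_self hA0.ne']
  have hWnn : ∀ i ∈ s', 0 ≤ W i := fun i hi => div_nonneg (hapos i hi).le hA0.le
  have hjensen := (phi_concaveOn hw).le_map_sum hWnn hWsum htmem
  have havg_mem : (∑ i ∈ s', W i • t i) ∈ Set.Ioc 0 r :=
    (convex_Ioc 0 r).sum_mem hWnn hWsum htmem
  have havg : ∑ i ∈ s', W i • t i = m / A := by
    rw [hm, Finset.sum_div]
    apply Finset.sum_congr rfl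
    intro i hi
    rw [hW, smul_eq_mul]
    field_simp
  have hstep2 : ∑ i ∈ s', a i * phi w (t i) ≤ A * phi w (m / A) := by
    have : ∑ i ∈ s', a i * phi w (t i) = A * ∑ i ∈ s', W i • phi w (t i) := by
      rw [Finset.mul_sum]
      apply Finset.sum_congr rfl
      intro i hi
      rw [hW, smul_eq_mul]
      field_simp
      try ring
    rw [this, ← havg]
    exact mul_le_mul_of_nonneg_left hjensen hA0.le
  have hstep3 : A * phi w (m / A) ≤ phi w m := by
    rw [havg] at havg_mem
    unfold phi
    have h1 : A * (m / A * (-Real.log (m / A)) ^ w) = m * (-Real.log (m / A)) ^ w := by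
      field_simp
    rw [h1]
    apply mul_le_mul_of_nonneg_left _ hm0.le
    apply Real.rpow_le_rpow
    · have : m / A ≤ 1 := le_trans havg_mem.2 hr1.le
      linarith [Real.log_nonpos havg_mem.1.le this]
    · rw [Real.log_div hm0.ne' hA0.ne']
      have := Real.log_nonpos hA0.le hA1
      linarith
    · linarith
  have hstep4 : phi w m ≤ phi w c :=
    phi_monoOn hw ⟨hm0, le_trans hmc hc⟩ ⟨hc0', hc⟩ hmc
  have hfin : phi w c = c * |Real.log c| ^ w := by
    unfold phi
    rw [abs_of_nonpos (Real.log_nonpos hc0'.le (le_trans hc hr1.le))]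
  linarith


/-- `B` is a countable measurable partition of `Ω` (mod `μ`-null sets for the cover). -/
def IsCountablePartition {Ω : Type*} [MeasurableSpace Ω] (μ : Measure Ω)
    (B : ℕ → Set Ω) : Prop :=
  (∀ i, MeasurableSet (B i)) ∧ Pairwise (Function.onFun Disjoint B) ∧ μ (⋃ i, B i) = μ Set.univ

/-- `K_w(B) = Σ_B μ(B) |log μ(B)|^w`. -/
noncomputable def Kw {Ω : Type*} [MeasurableSpace Ω] (μ : Measure Ω) (w : ℝ)
    (B : ℕ → Set Ω) : ℝ :=
  ∑' i, (μ (B i)).toReal * |Real.log (μ (B i)).toReal| ^ w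

/-- `K_w(C|B) = Σ_{B,C} μ(B∩C) |log(μ(B∩C)/μ(B))|^w`. -/
noncomputable def KwCond {Ω : Type*} [MeasurableSpace Ω] (μ : Measure Ω) (w : ℝ)
    (B C : ℕ → Set Ω) : ℝ :=
  ∑' p : ℕ × ℕ, (μ (B p.1 ∩ C p.2)).toReal *
    |Real.log ((μ (B p.1 ∩ C p.2)).toReal / (μ (B p.1)).toReal)| ^ w

theorem conditional_moment_le {Ω : Type*} [MeasurableSpace Ω]
    (μ : Measure Ω) [IsProbabilityMeasure μ] (w : ℝ) (hw : 1 ≤ w)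
    (B C : ℕ → Set Ω)
    (hB : IsCountablePartition μ B) (hC : IsCountablePartition μ C)
    (hBsmall : ∀ i, μ (B i) ≤ ENNReal.ofReal (Real.exp (-w)))
    (hCsmall : ∀ i, μ (C i) ≤ ENNReal.ofReal (Real.exp (-w)))
    (hKB : Summable fun i => (μ (B i)).toReal * |Real.log (μ (B i)).toReal| ^ w)
    (hKC : Summable fun i => (μ (C i)).toReal * |Real.log (μ (C i)).toReal| ^ w) :
    KwCond μ w B C ≤ Kw μ w C := by
  set F : ℕ × ℕ → ℝ := fun p => (μ (B p.1 ∩ C p.2)).toReal *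
    |Real.log ((μ (B p.1 ∩ C p.2)).toReal / (μ (B p.1)).toReal)| ^ w with hF
  have hFnn : ∀ p, 0 ≤ F p := fun p =>
    mul_nonneg ENNReal.toReal_nonneg (Real.rpow_nonneg (abs_nonneg _) _)
  have hKwnn : 0 ≤ Kw μ w C := tsum_nonneg fun i =>
    mul_nonneg ENNReal.toReal_nonneg (Real.rpow_nonneg (abs_nonneg _) _)
  by_cases hFs : Summable F
  · -- summable case
    set G : ℕ × ℕ → ℝ := fun q => F (q.2, q.1) with hG
    have hGs : Summable G := ((Equiv.prodComm ℕ ℕ).summable_iff).2 hFs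
    have h1 : KwCond μ w B C = ∑' q, G q := by
      rw [KwCond, ← (Equiv.prodComm ℕ ℕ).tsum_eq F]
      rfl
    have h2 : ∑' q, G q = ∑' j, ∑' i, G (j, i) := Summable.tsum_prod hGs
    -- per-j bound
    have per_j : ∀ j, ∑' i, G (j, i) ≤
        (μ (C j)).toReal * |Real.log (μ (C j)).toReal| ^ w := by
      intro j
      apply Summable.tsum_le_of_sum_le (hGs.prod_factor j)
      intro s
      have hsa : ∑ i ∈ s, (μ (B i)).toReal ≤ 1 := by
        rw [← ENNReal.toReal_sum (fun i _ => measure_ne_top μ _)]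
        have h : μ (⋃ i ∈ s, B i) = ∑ i ∈ s, μ (B i) :=
          measure_biUnion_finset (μ := μ)
            (fun i _ k _ hik => hB.2.1 hik) (fun i _ => hB.1 i)
        rw [← h]
        have h2 : μ (⋃ i ∈ s, B i) ≤ 1 := prob_le_one
        have h3 := ENNReal.toReal_mono ENNReal.one_ne_top h2
        simpa using h3
      have hsb : ∑ i ∈ s, (μ (B i ∩ C j)).toReal ≤ (μ (C j)).toReal := by
        rw [← ENNReal.toReal_sum (fun i _ => measure_ne_top μ _)]
        have h : μ (⋃ i ∈ s, B i ∩ C j) = ∑ i ∈ s, μ (B i ∩ C j) :=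
          measure_biUnion_finset (μ := μ)
            (fun i _ k _ hik =>
              ((hB.2.1 hik).mono Set.inter_subset_left Set.inter_subset_left))
            (fun i _ => (hB.1 i).inter (hC.1 j))
        rw [← h]
        exact ENNReal.toReal_mono (measure_ne_top μ _)
          (measure_mono (Set.iUnion₂_subset fun i _ => Set.inter_subset_right))
      exact finite_jensen hw s (fun i => (μ (B i)).toReal)
        (fun i => (μ (B i ∩ C j)).toReal)
        (fun i => ENNReal.toReal_nonneg)
        (fun i => ENNReal.toReal_mono (measure_ne_top μ _)
          (measure_mono Set.inter_subset_left))
        hsa hsb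
        (ENNReal.toReal_le_of_le_ofReal (Real.exp_nonneg _) (hCsmall j))
    have houter : Summable (fun j => ∑' i, G (j, i)) :=
      Summable.of_nonneg_of_le (fun j => tsum_nonneg (fun i => hFnn _)) per_j hKC
    calc KwCond μ w B C = ∑' j, ∑' i, G (j, i) := by rw [h1, h2]
      _ ≤ ∑' j, (μ (C j)).toReal * |Real.log (μ (C j)).toReal| ^ w :=
          Summable.tsum_le_tsum per_j houter hKC
      _ = Kw μ w C := rfl
  · rw [KwCond, tsum_eq_zero_of_not_summable hFs]
    exact hKwnn
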